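/- Let A be a unital C*-algebra and let S, T be unitary elements of A with ST = TS. Let f, g, h : ℂ → ℂ be the continuous functions which on the unit circle are given by f(e^{2πit}) = sin²(πt), g(e^{2πit}) = sin(πt)·c₀(t), h(e^{2πit}) = sin(πt)·c₁(t) for t ∈ [0,1], where c₀(t) = |cos(πt)| for t ∈ [0,1/2] and c₀(t) = 0 otherwise, and c₁(t) = |cos(πt)| for t ∈ (1/2,1] and c₁(t) = 0 otherwise; equivalently, on the unit circle f(z) = (1 − Re z)/2, g(z) = max(Im z, 0)/2 and h(z) = max(−Im z, 0)/2. Then the 2×2 matrix P(S,T) = [[f(S), g(S) + h(S)T], [h(S)T* + g(S), 1 − f(S)]] over A is a projection, i.e. P(S,T)* = P(S,T) and P(S,T)² = P(S,T). -/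

import Mathlib

open StarAlgebra in
lemma cfc_mem_elemental_aux {A : Type*} [CStarAlgebra A] (f : ℂ → ℂ) (S : A) [IsStarNormal S] :
    cfc f S ∈ elemental ℂ S := by
  by_cases hf : ContinuousOn f (spectrum ℂ S)
  · rw [cfc_apply f S, cfcHom_eq_of_isStarNormal]
    exact Subtype.coe_prop _
  · rw [cfc_apply_of_not_continuousOn S hf]
    exact zero_mem _

/-- For commuting unitaries `S, T` in a unital C*-algebra `A`, the matrix
`P(S,T) = [[f(S), g(S) + h(S)T], [h(S)T* + g(S), 1 - f(S)]]` is a projection, where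
`f, g, h : ℂ → ℂ` are the continuous functions which on the unit circle are given by
`f(z) = (1 - Re z)/2`, `g(z) = max(Im z, 0)/2`, `h(z) = max(-Im z, 0)/2`. -/
theorem stmt_0 {A : Type*} [CStarAlgebra A] (S T : A)
    (hS : S ∈ unitary A) (hT : T ∈ unitary A) (hST : S * T = T * S)
    (f g h : ℂ → ℂ)
    (hfc : Continuous f) (hgc : Continuous g) (hhc : Continuous h)
    (hf : ∀ z : ℂ, ‖z‖ = 1 → f z = (((1 - z.re) / 2 : ℝ) : ℂ))
    (hg : ∀ z : ℂ, ‖z‖ = 1 → g z = ((max z.im 0 / 2 : ℝ) : ℂ))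
    (hh : ∀ z : ℂ, ‖z‖ = 1 → h z = ((max (-z.im) 0 / 2 : ℝ) : ℂ))
    (P : Matrix (Fin 2) (Fin 2) A)
    (hP : P = !![cfc f S, cfc g S + cfc h S * T;
                 cfc h S * star T + cfc g S, 1 - cfc f S]) :
    star P = P ∧ P * P = P := by
  haveI hSN : IsStarNormal S := ⟨by show star S * S = S * star S; rw [hS.1, hS.2]⟩
  have hsp : ∀ z ∈ spectrum ℂ S, ‖z‖ = 1 := by
    intro z hz
    simpa using spectrum.subset_circle_of_unitary hS hz
  -- T and star T commute with S
  have hTS : T * S = S * T := hST.symm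
  have hTS' : star T * S = S * star T := by
    calc star T * S = star T * (S * (T * star T)) := by rw [hT.2, mul_one]
    _ = star T * ((S * T) * star T) := by rw [mul_assoc]
    _ = star T * ((T * S) * star T) := by rw [hST]
    _ = (star T * T) * (S * star T) := by simp only [mul_assoc]
    _ = S * star T := by rw [hT.1, one_mul]
  -- the centralizer of {T} is closed
  have hcl : IsClosed ((StarSubalgebra.centralizer ℂ {T} : StarSubalgebra ℂ A) : Set A) := by
    rw [StarSubalgebra.coe_centralizer]
    have : (({T} ∪ star {T} : Set A)).centralizer
        = ⋂ m ∈ ({T} ∪ star {T} : Set A), {c | m * c = c * m} := by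
      ext x; simp [Set.mem_centralizer_iff]
    rw [this]
    exact isClosed_biInter fun m _ =>
      isClosed_eq (continuous_const.mul continuous_id) (continuous_id.mul continuous_const)
  have hScent : S ∈ StarSubalgebra.centralizer ℂ {T} := by
    rw [StarSubalgebra.mem_centralizer_iff]
    rintro g rfl
    exact ⟨hTS, hTS'⟩
  have hcomm : ∀ k : ℂ → ℂ, T * cfc k S = cfc k S * T ∧ star T * cfc k S = cfc k S * star T := by
    intro k
    have := StarAlgebra.elemental.le_of_mem hcl hScent (cfc_mem_elemental_aux k S)
    rw [StarSubalgebra.mem_centralizer_iff] at this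
    exact this T rfl
  -- self-adjointness of the cfc elements
  have hreal : ∀ k : ℂ → ℂ, (∀ z ∈ spectrum ℂ S, star (k z) = k z) → star (cfc k S) = cfc k S := by
    intro k hk
    rw [← cfc_star]
    exact cfc_congr hk
  have hfr : star (cfc f S) = cfc f S := hreal f fun z hz => by
    rw [hf z (hsp z hz)]; exact Complex.conj_ofReal _
  have hgr : star (cfc g S) = cfc g S := hreal g fun z hz => by
    rw [hg z (hsp z hz)]; exact Complex.conj_ofReal _
  have hhr : star (cfc h S) = cfc h S := hreal h fun z hz => by
    rw [hh z (hsp z hz)]; exact Complex.conj_ofReal _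
  -- key algebraic identities
  have hnormsq : ∀ z ∈ spectrum ℂ S, z.re * z.re + z.im * z.im = 1 := by
    intro z hz
    have h1 : ‖z‖ = 1 := hsp z hz
    have h2 : Complex.normSq z = 1 := by
      have := Complex.sq_norm z
      rw [h1] at this
      simpa using this.symm
    rw [← Complex.normSq_apply, h2]
  have hbc : cfc g S * cfc h S = 0 := by
    rw [← cfc_mul g h S hgc.continuousOn hhc.continuousOn]
    have : cfc (fun z => g z * h z) S = cfc (fun _ : ℂ => (0 : ℂ)) S := by
      apply cfc_congr
      intro z hz
      have hz1 := hsp z hz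
      show g z * h z = 0
      rw [hg z hz1, hh z hz1]
      rcases le_total z.im 0 with h0 | h0
      · have e : max z.im 0 = 0 := max_eq_right h0
        simp [e]
      · have e : max (-z.im) 0 = 0 := max_eq_right (by linarith)
        simp [e]
    rw [this]
    exact cfc_zero ℂ S
  have hcb : cfc h S * cfc g S = 0 := (cfc_commute_cfc h g S).eq.trans hbc
  have hkey : cfc g S * cfc g S + cfc h S * cfc h S = cfc f S - cfc f S * cfc f S := by
    rw [← cfc_mul g g S hgc.continuousOn hgc.continuousOn,
      ← cfc_mul h h S hhc.continuousOn hhc.continuousOn,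
      ← cfc_mul f f S hfc.continuousOn hfc.continuousOn,
      ← cfc_add (a := S) (fun z => g z * g z) (fun z => h z * h z)
        ((hgc.mul hgc).continuousOn) ((hhc.mul hhc).continuousOn),
      ← cfc_sub f (fun z => f z * f z) S hfc.continuousOn ((hfc.mul hfc).continuousOn)]
    apply cfc_congr
    intro z hz
    have hz1 := hsp z hz
    have hn := hnormsq z hz
    show g z * g z + h z * h z = f z - f z * f z
    rw [hf z hz1, hg z hz1, hh z hz1]
    have key : (max z.im 0 / 2) * (max z.im 0 / 2) + (max (-z.im) 0 / 2) * (max (-z.im) 0 / 2)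
        = (1 - z.re) / 2 - ((1 - z.re) / 2) * ((1 - z.re) / 2) := by
      rcases le_total z.im 0 with h0 | h0
      · have e1 : max z.im 0 = 0 := max_eq_right h0
        have e2 : max (-z.im) 0 = -z.im := max_eq_left (by linarith)
        rw [e1, e2]; nlinarith [hn]
      · have e1 : max z.im 0 = z.im := max_eq_left h0
        have e2 : max (-z.im) 0 = 0 := max_eq_right (by linarith)
        rw [e1, e2]; nlinarith [hn]
    exact_mod_cast congrArg (fun t : ℝ => (t : ℂ)) key
  have hab : cfc f S * cfc g S = cfc g S * cfc f S := cfc_commute_cfc f g S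
  have hac : cfc f S * cfc h S = cfc h S * cfc f S := cfc_commute_cfc f h S
  have hTa := hcomm f
  have hTb := hcomm g
  have hTc := hcomm h
  have hTT' : T * star T = 1 := hT.2
  have hT'T : star T * T = 1 := hT.1
  set a := cfc f S with ha
  set b := cfc g S with hbdef
  set c := cfc h S with hcdef
  constructor
  · -- star P = P
    rw [hP]
    have s01 : star (c * star T + b) = b + c * T := by
      calc star (c * star T + b) = T * c + b := by rw [star_add, star_mul, star_star, hhr, hgr]
        _ = b + c * T := by rw [hTc.1, add_comm]
    have s10 : star (b + c * T) = c * star T + b := by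
      calc star (b + c * T) = b + star T * c := by rw [star_add, star_mul, hgr, hhr]
        _ = c * star T + b := by rw [hTc.2, add_comm]
    have s11 : star (1 - a) = 1 - a := by rw [star_sub, star_one, hfr]
    ext i j
    fin_cases i <;> fin_cases j <;>
      simp [Matrix.star_apply, hfr, s01, s10, s11]
  · -- P * P = P
    rw [hP, Matrix.mul_fin_two]
    have e00 : a * a + (b + c * T) * (c * star T + b) = a := by
      have expand : (b + c * T) * (c * star T + b)
          = b * c * star T + b * b + c * (T * c) * star T + c * (T * b) := by noncomm_ring
      rw [expand, hTc.1, hTb.1, hbc]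
      calc a * a + (0 * star T + b * b + c * (c * T) * star T + c * (b * T))
          = a * a + (b * b + c * c * (T * star T) + c * b * T) := by noncomm_ring
        _ = a * a + (b * b + c * c * 1 + 0 * T) := by rw [hTT', hcb]
        _ = a * a + (b * b + c * c) := by noncomm_ring
        _ = a * a + (a - a * a) := by rw [hkey]
        _ = a := by noncomm_ring
    have e01 : a * (b + c * T) + (b + c * T) * (1 - a) = b + c * T := by
      have h2 : a * (c * T) = c * T * a := by
        rw [← mul_assoc, hac, mul_assoc, ← hTa.1, ← mul_assoc]
      calc a * (b + c * T) + (b + c * T) * (1 - a)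
          = (a * b - b * a) + (a * (c * T) - c * T * a) + (b + c * T) := by noncomm_ring
        _ = (a * b - b * a) + (c * T * a - c * T * a) + (b + c * T) := by rw [h2]
        _ = (b * a - b * a) + (c * T * a - c * T * a) + (b + c * T) := by rw [hab]
        _ = b + c * T := by noncomm_ring
    have e10 : (c * star T + b) * a + (1 - a) * (c * star T + b) = c * star T + b := by
      have h2 : a * (c * star T) = c * star T * a := by
        rw [← mul_assoc, hac, mul_assoc, ← hTa.2, ← mul_assoc]
      calc (c * star T + b) * a + (1 - a) * (c * star T + b)
          = (c * star T * a - a * (c * star T)) + (b * a - a * b) + (c * star T + b) := by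
            noncomm_ring
        _ = (c * star T * a - c * star T * a) + (b * a - a * b) + (c * star T + b) := by rw [h2]
        _ = (c * star T * a - c * star T * a) + (b * a - b * a) + (c * star T + b) := by rw [hab]
        _ = c * star T + b := by noncomm_ring
    have e11 : (c * star T + b) * (b + c * T) + (1 - a) * (1 - a) = 1 - a := by
      have expand : (c * star T + b) * (b + c * T)
          = c * (star T * b) + c * (star T * c) * T + b * b + b * c * T := by noncomm_ring
      rw [expand, hTb.2, hTc.2, hbc]
      calc c * (b * star T) + c * (c * star T) * T + b * b + 0 * T + (1 - a) * (1 - a)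
          = c * b * star T + c * c * (star T * T) + b * b + (1 - a) * (1 - a) := by noncomm_ring
        _ = 0 * star T + c * c * 1 + b * b + (1 - a) * (1 - a) := by rw [hcb, hT'T]
        _ = (b * b + c * c) + (1 - a) * (1 - a) := by noncomm_ring
        _ = (a - a * a) + (1 - a) * (1 - a) := by rw [hkey]
        _ = 1 - a := by noncomm_ring
    rw [e00, e01, e10, e11]
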